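/- Let Z_1,...,Z_l ∈ ℤ^m be vectors with entries bounded by n^T in absolute value, and let p be a prime greater than e^{(k log k)/2 + kT log n}. If there is a non-zero vector w ∈ (ℤ/pℤ)^m with at most k non-zero entries that is orthogonal to the reductions Z_1 mod p, ..., Z_l mod p, then there is a non-zero vector w' ∈ ℤ^m with at most k non-zero entries orthogonal to Z_1,...,Z_l. -/

import Mathlib

open Matrix Finset Submodule Module


lemma hadamard_det_le {s : ℕ} (A : Matrix (Fin s) (Fin s) ℝ) {x : ℝ} (hx : 0 ≤ x)
    (h : ∀ i j, |A i j| ≤ x) : |A.det| ≤ (Real.sqrt s * x) ^ s := by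
  rcases Nat.eq_zero_or_pos s with hs | _
  · subst hs; simp [Matrix.det_fin_zero]
  · let f : Fin s → EuclideanSpace ℝ (Fin s) := fun i => (WithLp.equiv 2 (Fin s → ℝ)).symm (A i)
    have hcard : finrank ℝ (EuclideanSpace ℝ (Fin s)) = Fintype.card (Fin s) := by simp
    set b := @InnerProductSpace.gramSchmidtOrthonormalBasis ℝ (EuclideanSpace ℝ (Fin s)) inferInstance inferInstance inferInstance (Fin s) inferInstance inferInstance (inferInstance : WellFoundedLT (Fin s)) inferInstance inferInstance hcard f with hb
    have hdet : b.toBasis.det f = ∏ i, inner ℝ (b i) (f i) :=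
      @InnerProductSpace.gramSchmidtOrthonormalBasis_det ℝ (EuclideanSpace ℝ (Fin s)) inferInstance inferInstance inferInstance (Fin s) inferInstance inferInstance (inferInstance : WellFoundedLT (Fin s)) inferInstance inferInstance hcard f _
    set e := EuclideanSpace.basisFun (Fin s) ℝ with he
    have h1 : b.toBasis.toMatrix f = b.toBasis.toMatrix e.toBasis * e.toBasis.toMatrix f :=
      (Basis.toMatrix_mul_toMatrix _ _ _).symm
    have h2 : e.toBasis.toMatrix f = Aᵀ := by
      ext i j
      simp [Basis.toMatrix_apply, f, he, EuclideanSpace.basisFun_repr,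
        WithLp.equiv_symm_apply, PiLp.toLp_apply]
    have h3 : |(b.toBasis.toMatrix e.toBasis).det| = 1 := by
      have := OrthonormalBasis.det_to_matrix_orthonormalBasis (𝕜 := ℝ) b e
      rw [show (⇑e.toBasis) = ⇑e from OrthonormalBasis.coe_toBasis e, ← Real.norm_eq_abs,
        ← Basis.det_apply]
      exact this
    have h4 : |A.det| = |b.toBasis.det f| := by
      rw [Basis.det_apply, h1, Matrix.det_mul, abs_mul, h2, Matrix.det_transpose, h3, one_mul]
    rw [h4, hdet, Finset.abs_prod]
    have key : ∀ i : Fin s, |(inner ℝ (b i) (f i) : ℝ)| ≤ Real.sqrt s * x := fun i => ?_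
    · calc ∏ i, |(inner ℝ (b i) (f i) : ℝ)| ≤ ∏ _i : Fin s, Real.sqrt s * x :=
            Finset.prod_le_prod (fun i _ => abs_nonneg _) (fun i _ => key i)
        _ = (Real.sqrt s * x) ^ s := by simp
    calc |(inner ℝ (b i) (f i) : ℝ)| ≤ ‖b i‖ * ‖f i‖ := abs_real_inner_le_norm _ _
      _ = ‖f i‖ := by rw [b.orthonormal.1 i, one_mul]
      _ ≤ Real.sqrt s * x := by
        rw [EuclideanSpace.norm_eq]
        have : ∑ j, ‖f i j‖ ^ 2 ≤ s * x ^ 2 := by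
          calc ∑ j, ‖f i j‖ ^ 2 ≤ ∑ _j : Fin s, x ^ 2 := by
                refine Finset.sum_le_sum fun j _ => ?_
                have := h i j
                have : ‖f i j‖ ≤ x := by
                  simpa [f, WithLp.equiv_symm_apply, PiLp.toLp_apply, Real.norm_eq_abs] using h i j
                exact pow_le_pow_left₀ (norm_nonneg _) this 2
            _ = s * x ^ 2 := by simp [mul_comm]
        calc Real.sqrt (∑ j, ‖f i j‖ ^ 2) ≤ Real.sqrt (s * x ^ 2) := Real.sqrt_le_sqrt this
          _ = Real.sqrt s * x := by
            rw [Real.sqrt_mul (by positivity), Real.sqrt_sq hx]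


lemma exists_square_det_ne_zero {l : ℕ} {ι : Type*} [Fintype ι] [DecidableEq ι]
    (M : ι → Fin l → ℚ) (hM : LinearIndependent ℚ M) :
    ∃ r : ι → Fin l, (Matrix.of fun a b : ι => M b (r a)).det ≠ 0 := by
  classical
  -- the matrix with rows M
  have hrank : (Matrix.of M).rank = Fintype.card ι := hM.rank_matrix
  have hrankT : (Matrix.of M)ᵀ.rank = Fintype.card ι := by
    rw [Matrix.rank_transpose]; exact hrank
  -- rows of the transpose are R i : ι → ℚ
  set R : Fin l → (ι → ℚ) := fun i => fun j => M j i with hR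
  have hspanR : span ℚ (Set.range R) = ⊤ := by
    apply Submodule.eq_top_of_finrank_eq
    have := Matrix.rank_eq_finrank_span_row ((Matrix.of M)ᵀ)
    have hrange : Set.range ((Matrix.of M)ᵀ.row) = Set.range R := rfl
    rw [this, hrange] at hrankT
    rw [hrankT, Module.finrank_pi]
  obtain ⟨t, hts, htspan, htind⟩ := exists_linearIndependent ℚ (Set.range R)
  have htfin : t.Finite := htind.setFinite
  haveI := htfin.fintype
  have hB : ⊤ ≤ span ℚ (Set.range ((↑) : t → (ι → ℚ))) := by
    rw [Subtype.range_coe, htspan, hspanR]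
  let B : Basis t ℚ (ι → ℚ) := Basis.mk htind hB
  have hcard : Fintype.card ι = Fintype.card t := by
    have h1 := Module.finrank_eq_card_basis B
    rw [Module.finrank_pi] at h1
    exact h1
  let e : ι ≃ t := Fintype.equivOfCardEq hcard
  have hchoose : ∀ a : ι, ∃ i : Fin l, R i = ((e a : t) : ι → ℚ) := by
    intro a
    obtain ⟨i, hi⟩ := hts (e a).2
    exact ⟨i, hi⟩
  choose r hr using hchoose
  refine ⟨r, ?_⟩
  -- rows of the square matrix are linearly independent
  have hrows : LinearIndependent ℚ (fun a : ι => (fun b : ι => M b (r a))) := by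
    have : (fun a : ι => (fun b : ι => M b (r a))) = fun a : ι => ((e a : t) : ι → ℚ) := by
      funext a
      exact hr a
    rw [this]
    exact htind.comp (fun a => e a) e.injective
  intro hdet
  obtain ⟨v, hv0, hv⟩ := (Matrix.exists_vecMul_eq_zero_iff).2 hdet
  have hsum : (∑ i : ι, v i • fun b : ι => M b (r i)) = 0 := by
    funext b
    have hb := congrFun hv b
    simpa [Matrix.vecMul, dotProduct, Finset.sum_apply] using hb
  exact hv0 (funext (Fintype.linearIndependent_iff.1 hrows v hsum))


lemma rat_to_int_vec {m : ℕ} (q : Fin m → ℚ) :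
    ∃ w' : Fin m → ℤ, (∀ j, (w' j : ℚ) = q j * ((∏ j', (q j').den : ℕ) : ℚ)) ∧
      ∀ j, (w' j = 0 ↔ q j = 0) := by
  set N : ℕ := ∏ j', (q j').den with hN
  have hdvd : ∀ j, (q j).den ∣ N := fun j => Finset.dvd_prod_of_mem _ (Finset.mem_univ j)
  have hNpos : 0 < N := Finset.prod_pos fun j _ => (q j).pos
  refine ⟨fun j => (q j).num * ((N / (q j).den : ℕ) : ℤ), fun j => ?_, fun j => ?_⟩
  · have hmul : ((q j).den : ℚ) * ((N / (q j).den : ℕ) : ℚ) = (N : ℚ) := by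
      rw [← Nat.cast_mul, Nat.mul_div_cancel' (hdvd j)]
    have hden0 : ((q j).den : ℚ) ≠ 0 := by
      exact_mod_cast (q j).den_nz
    have hnum : ((q j).num : ℚ) = q j * (q j).den :=
      (div_eq_iff hden0).1 (Rat.num_div_den (q j))
    rw [Int.cast_mul, Int.cast_natCast, hnum, mul_assoc, hmul]
  · constructor
    · intro h
      have ht : ((N / (q j).den : ℕ) : ℤ) ≠ 0 := by
        have hyy : (q j).den * (N / (q j).den) = N := Nat.mul_div_cancel' (hdvd j)
        intro hc
        rw [Int.natCast_eq_zero] at hc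
        rw [hc, mul_zero] at hyy
        omega
      have : (q j).num = 0 := by
        rcases mul_eq_zero.1 h with h' | h'
        · exact h'
        · exact absurd h' ht
      exact Rat.num_eq_zero.1 this
    · intro h
      simp [h]

lemma int_det_abs_le {ι : Type*} [Fintype ι] [DecidableEq ι] (A : Matrix ι ι ℤ) {x : ℝ}
    (hx : 0 ≤ x) (h : ∀ i j, (|A i j| : ℝ) ≤ x) :
    |(A.det : ℝ)| ≤ (Real.sqrt (Fintype.card ι) * x) ^ (Fintype.card ι) := by
  classical
  set c := Fintype.card ι with hc
  let e : ι ≃ Fin c := Fintype.equivFin ι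
  let B : Matrix (Fin c) (Fin c) ℝ := fun a b => ((A (e.symm a) (e.symm b) : ℤ) : ℝ)
  have hdet : (A.det : ℝ) = B.det := by
    have h1 : ((Int.castRingHom ℝ) A.det) = (A.map (Int.castRingHom ℝ)).det :=
      RingHom.map_det _ _
    have h2 : B = (A.map (Int.castRingHom ℝ)).submatrix e.symm e.symm := rfl
    rw [h2, Matrix.det_submatrix_equiv_self]
    exact h1
  rw [hdet]
  exact hadamard_det_le B hx fun i j => h _ _

lemma pow_bound {c k n : ℕ} {T : ℝ} (hc : 1 ≤ c) (hck : c ≤ k) (hn : 1 ≤ n) (hT : 0 < T) :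
    (Real.sqrt c * (n : ℝ) ^ T) ^ c ≤
      Real.exp ((k * Real.log k) / 2 + k * T * Real.log n) := by
  have hc0 : (0 : ℝ) < c := by positivity
  have hn0 : (0 : ℝ) < n := by exact_mod_cast hn
  have h1 : (Real.sqrt c * (n : ℝ) ^ T) ^ c =
      Real.exp (c * (Real.log c / 2 + T * Real.log n)) := by
    have hb : Real.sqrt c * (n : ℝ) ^ T = Real.exp (Real.log c / 2 + T * Real.log n) := by
      rw [Real.exp_add, ← Real.log_sqrt hc0.le, Real.exp_log (Real.sqrt_pos.2 hc0),
        ← Real.log_rpow hn0, Real.exp_log (by positivity)]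
    rw [hb, ← Real.exp_nat_mul]
  rw [h1, Real.exp_le_exp]
  have hlogc : 0 ≤ Real.log c := Real.log_nonneg (by exact_mod_cast hc)
  have hlogck : Real.log c ≤ Real.log k :=
    Real.log_le_log hc0 (by exact_mod_cast hck)
  have hlogn : 0 ≤ Real.log n := Real.log_nonneg (by exact_mod_cast hn)
  have hckR : (c : ℝ) ≤ k := by exact_mod_cast hck
  nlinarith [mul_le_mul hckR hlogck hlogc (by positivity : (0:ℝ) ≤ (k:ℝ)),
    mul_le_mul hckR (le_refl (T * Real.log n)) (by positivity) (by positivity : (0:ℝ) ≤ (k:ℝ))]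

lemma sum_subtype_support {α β : Type*} [Fintype α] [AddCommMonoid β] (p : α → Prop)
    [DecidablePred p] (F : α → β) (h : ∀ a, ¬ p a → F a = 0) :
    ∑ a : {a // p a}, F a = ∑ a, F a := by
  rw [← Finset.sum_filter_of_ne (s := Finset.univ) (f := F) (p := p)
      (fun x _ hx => by by_contra hp; exact hx (h x hp))]
  exact (Finset.sum_subtype _ (by simp) F).symm

/-- Lifting sparse normal vectors from `ℤ/pℤ` to `ℤ`: if `Z_1, ..., Z_l ∈ ℤ^m` have entries
bounded by `n^T`, `p` is a prime larger than `exp((k log k)/2 + kT log n)`, and some non-zero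
vector `w ∈ (ℤ/pℤ)^m` with at most `k` non-zero entries is orthogonal to all `Z_i mod p`, then
there is a non-zero `w' ∈ ℤ^m` with at most `k` non-zero entries orthogonal to all `Z_i`. -/
theorem lift_sparse_normal_vector {m l k n : ℕ} (hm : 0 < m) (hl : 0 < l) (hk : 0 < k)
    (hn : 0 < n) (T : ℝ) (hT : 0 < T)
    (Z : Fin l → Fin m → ℤ) (hZ : ∀ i j, (|Z i j| : ℝ) ≤ (n : ℝ) ^ T)
    (p : ℕ) [Fact p.Prime]
    (hp : Real.exp ((k * Real.log k) / 2 + k * T * Real.log n) < p)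
    (w : Fin m → ZMod p) (hw0 : w ≠ 0)
    (hwsupp : Set.ncard {j | w j ≠ 0} ≤ k)
    (hworth : ∀ i, ∑ j, (Z i j : ZMod p) * w j = 0) :
    ∃ w' : Fin m → ℤ, w' ≠ 0 ∧ Set.ncard {j | w' j ≠ 0} ≤ k ∧
      ∀ i, ∑ j, Z i j * w' j = 0 := by
  classical
  obtain ⟨j₀, hj₀⟩ : ∃ j, w j ≠ 0 := Function.ne_iff.1 hw0
  haveI hnei : Nonempty {j : Fin m // w j ≠ 0} := ⟨⟨j₀, hj₀⟩⟩
  have hcardk : Fintype.card {j : Fin m // w j ≠ 0} ≤ k := by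
    have h1 : Fintype.card {j : Fin m // w j ≠ 0} = Set.ncard {j | w j ≠ 0} := by
      rw [← Nat.card_coe_set_eq, Nat.card_eq_fintype_card]
      exact Fintype.card_congr (Equiv.subtypeEquivRight fun j => Iff.rfl)
    omega
  by_cases hind : LinearIndependent ℚ
      (fun j : {j : Fin m // w j ≠ 0} => fun i : Fin l => ((Z i (j : Fin m) : ℤ) : ℚ))
  · exfalso
    obtain ⟨r, hdetQ⟩ := exists_square_det_ne_zero _ hind
    set AZ : Matrix {j : Fin m // w j ≠ 0} {j : Fin m // w j ≠ 0} ℤ :=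
      Matrix.of (fun a b => Z (r a) (b : Fin m)) with hAZ
    have hmapQ : (Matrix.of fun a b : {j : Fin m // w j ≠ 0} =>
        (fun j : {j : Fin m // w j ≠ 0} => fun i : Fin l => ((Z i (j : Fin m) : ℤ) : ℚ)) b (r a)) =
        AZ.map ⇑(Int.castRingHom ℚ) := by
      ext a b; rfl
    have hdetZ : AZ.det ≠ 0 := by
      intro h0
      apply hdetQ
      have hdq := RingHom.map_det (Int.castRingHom ℚ) AZ
      rw [RingHom.mapMatrix_apply] at hdq
      rw [hmapQ, ← hdq, h0]
      simp
    let wS : {j : Fin m // w j ≠ 0} → ZMod p := fun j => w (j : Fin m)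
    have hwS : wS ≠ 0 := fun h => hj₀ (congrFun h ⟨j₀, hj₀⟩)
    have hmv : (AZ.map ⇑(Int.castRingHom (ZMod p))) *ᵥ wS = 0 := by
      funext a
      have hres : ∑ j : {j : Fin m // w j ≠ 0},
          ((Z (r a) (j : Fin m) : ℤ) : ZMod p) * w (j : Fin m) = 0 := by
        rw [sum_subtype_support (fun j => w j ≠ 0)
          (fun j => ((Z (r a) j : ℤ) : ZMod p) * w j)
          (fun j hj => by simp [not_not.1 hj])]
        exact hworth (r a)
      simpa [Matrix.mulVec, dotProduct, Matrix.map_apply, wS, hAZ] using hres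
    have hdet0 : (AZ.map ⇑(Int.castRingHom (ZMod p))).det = 0 :=
      Matrix.exists_mulVec_eq_zero_iff.1 ⟨wS, hwS, hmv⟩
    have hdvd : (p : ℤ) ∣ AZ.det := by
      rw [← ZMod.intCast_zmod_eq_zero_iff_dvd]
      have hdq := RingHom.map_det (Int.castRingHom (ZMod p)) AZ
      rw [RingHom.mapMatrix_apply] at hdq
      calc ((AZ.det : ℤ) : ZMod p) = (AZ.map ⇑(Int.castRingHom (ZMod p))).det := hdq
        _ = 0 := hdet0
    have hple : (p : ℤ) ≤ |AZ.det| := Int.le_of_dvd (abs_pos.2 hdetZ) ((dvd_abs _ _).2 hdvd)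
    have hc1 : 1 ≤ Fintype.card {j : Fin m // w j ≠ 0} := Fintype.card_pos
    have hxnn : (0 : ℝ) ≤ (n : ℝ) ^ T := by positivity
    have hHad : |((AZ.det : ℤ) : ℝ)| ≤
        (Real.sqrt (Fintype.card {j : Fin m // w j ≠ 0}) * (n : ℝ) ^ T) ^
          (Fintype.card {j : Fin m // w j ≠ 0}) :=
      int_det_abs_le AZ hxnn (fun a b => hZ (r a) (b : Fin m))
    have hfin : (p : ℝ) ≤ Real.exp ((k * Real.log k) / 2 + k * T * Real.log n) := by
      calc (p : ℝ) ≤ |((AZ.det : ℤ) : ℝ)| := by exact_mod_cast hple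
        _ ≤ (Real.sqrt (Fintype.card {j : Fin m // w j ≠ 0}) * (n : ℝ) ^ T) ^
              (Fintype.card {j : Fin m // w j ≠ 0}) := hHad
        _ ≤ Real.exp ((k * Real.log k) / 2 + k * T * Real.log n) :=
            pow_bound hc1 hcardk hn hT
    exact absurd hp (not_lt.2 hfin)
  · obtain ⟨g, hgsum, j₁, hj₁⟩ := Fintype.not_linearIndependent_iff.1 hind
    set q : Fin m → ℚ := fun j => if h : w j ≠ 0 then g ⟨j, h⟩ else 0 with hq
    have hqw : ∀ j, w j = 0 → q j = 0 := fun j hj => by simp [hq, hj]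
    have hqorth : ∀ i, ∑ j, ((Z i j : ℤ) : ℚ) * q j = 0 := by
      intro i
      rw [← sum_subtype_support (fun j => w j ≠ 0) (fun j => ((Z i j : ℤ) : ℚ) * q j)
        (fun j hj => by beta_reduce; rw [hqw j (not_not.1 hj), mul_zero])]
      have hgs := congrFun hgsum i
      simp only [Finset.sum_apply, Pi.smul_apply, smul_eq_mul, Pi.zero_apply] at hgs
      calc ∑ j : {j : Fin m // w j ≠ 0}, ((Z i (j : Fin m) : ℤ) : ℚ) * q (j : Fin m)
          = ∑ j : {j : Fin m // w j ≠ 0}, g j * ((Z i (j : Fin m) : ℤ) : ℚ) := by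
            refine Finset.sum_congr rfl fun j _ => ?_
            rw [show q (j : Fin m) = g j from by rw [hq]; exact dif_pos j.2]
            ring
        _ = 0 := hgs
    obtain ⟨w', hwq, hw'0iff⟩ := rat_to_int_vec q
    refine ⟨w', ?_, ?_, ?_⟩
    · intro h0
      apply hj₁
      have hq0 : q (j₁ : Fin m) = 0 := (hw'0iff _).1 (congrFun h0 _)
      rwa [show q (j₁ : Fin m) = g j₁ from by rw [hq]; exact dif_pos j₁.2] at hq0
    · refine le_trans (le_trans (Set.ncard_le_ncard ?_ (Set.toFinite _)) le_rfl) hwsupp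
      intro j hj
      simp only [Set.mem_setOf_eq] at hj ⊢
      intro hwj
      exact hj ((hw'0iff j).2 (hqw j hwj))
    · intro i
      have hcast : ((∑ j, Z i j * w' j : ℤ) : ℚ) = 0 := by
        push_cast
        calc ∑ j, ((Z i j : ℤ) : ℚ) * ((w' j : ℤ) : ℚ)
            = ∑ j, ((Z i j : ℤ) : ℚ) * (q j * ((∏ j', (q j').den : ℕ) : ℚ)) := by
              refine Finset.sum_congr rfl fun j _ => by rw [hwq j]
          _ = (∑ j, ((Z i j : ℤ) : ℚ) * q j) * ((∏ j', (q j').den : ℕ) : ℚ) := by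
              rw [Finset.sum_mul]; exact Finset.sum_congr rfl fun j _ => by ring
          _ = 0 := by rw [hqorth i, zero_mul]
      exact_mod_cast hcast
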